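/- Let G = (V,E) be connected, G' = (V,E') with E ⊆ E', vw ∈ E' \ E, and C a vw-cut of G. If there exists an edge e ∈ C contained in no (vw,C)-connected component of G, then every x ∈ {0,1}^{E'} encoding a lifted multicut with 1 − x_{vw} = Σ_{e' ∈ C}(1 − x_{e'}) satisfies x_e = 1; consequently the corresponding face of Ξ_{GG'} has dimension at most |E'| − 2 and is not a facet. -/

import Mathlib

open SimpleGraph

variable {V : Type}

section Defs

variable [Fintype V] [DecidableEq V]

/-- A decomposition of a graph `G`: a partition of the vertex set into
blocks each of which induces a connected subgraph of `G`. -/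
def IsDecomposition (G : SimpleGraph V) (P : Set (Set V)) : Prop :=
  (∀ U ∈ P, ∀ W ∈ P, U ≠ W → Disjoint U W) ∧
  (∀ v : V, ∃ U ∈ P, v ∈ U) ∧
  (∀ U ∈ P, (G.induce U).Connected)

/-- An edge `e` straddles distinct blocks of `P` if no block contains both endpoints. -/
def Straddles (P : Set (Set V)) (e : Sym2 V) : Prop := ∀ U ∈ P, ¬ ∀ v ∈ e, v ∈ U

/-- The set of edges of `G` straddling distinct blocks of `P` (the map `φ_G`). -/
def cutEdges (G : SimpleGraph V) (P : Set (Set V)) : Set (Sym2 V) :=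
  {e | e ∈ G.edgeSet ∧ Straddles P e}

/-- A multicut of `G`: a set of edges meeting every cycle of `G` in a number of
edges different from 1. -/
def IsMulticut (G : SimpleGraph V) (M : Set (Sym2 V)) : Prop :=
  M ⊆ G.edgeSet ∧ ∀ ⦃u : V⦄ (c : G.Walk u u), c.IsCycle →
    (M ∩ {e | e ∈ c.edges}).ncard ≠ 1

/-- A multicut of `G'` lifted from `G`. -/
def IsLiftedMulticut (G G' : SimpleGraph V) (M : Set (Sym2 V)) : Prop :=
  ∃ P : Set (Set V), IsDecomposition G P ∧ M = cutEdges G' P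

/-- The closed walk `c` has a chord in the graph `H`: an edge of `H` joining two
vertices of `c` that is not an edge of `c`. -/
def HasChord (H : SimpleGraph V) {G : SimpleGraph V} {u : V} (c : G.Walk u u) : Prop :=
  ∃ e ∈ H.edgeSet, (∀ v ∈ e, v ∈ c.support) ∧ e ∉ c.edges

/-- A `vw`-cut of `G`: a minimal set of edges whose removal disconnects `v` from `w`. -/
def IsCut (G : SimpleGraph V) (v w : V) (C : Finset (Sym2 V)) : Prop :=
  ↑C ⊆ G.edgeSet ∧ ¬ (G.deleteEdges ↑C).Reachable v w ∧
    ∀ C' : Finset (Sym2 V), C' ⊂ C → (G.deleteEdges ↑C').Reachable v w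

/-- The cycle inequalities for cycles of `G`. -/
def CycleIneqs (G : SimpleGraph V) (x : Sym2 V → ℕ) : Prop :=
  ∀ ⦃u : V⦄ (c : G.Walk u u), c.IsCycle → ∀ e ∈ c.edges,
    x e ≤ ∑ e' ∈ c.edges.toFinset.erase e, x e'

/-- The path inequalities for pairs `vw ∈ E' \ E` and `vw`-paths of `G`. -/
def PathIneqs (G G' : SimpleGraph V) (x : Sym2 V → ℕ) : Prop :=
  ∀ v w : V, s(v, w) ∈ G'.edgeSet \ G.edgeSet →
    ∀ p : G.Walk v w, p.IsPath → x s(v, w) ≤ ∑ e ∈ p.edges.toFinset, x e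

/-- The cut inequalities for pairs `vw ∈ E' \ E` and `vw`-cuts of `G`. -/
def CutIneqs (G G' : SimpleGraph V) (x : Sym2 V → ℕ) : Prop :=
  ∀ v w : V, s(v, w) ∈ G'.edgeSet \ G.edgeSet →
    ∀ C : Finset (Sym2 V), IsCut G v w C → 1 - x s(v, w) ≤ ∑ e ∈ C, (1 - x e)

/-- Characteristic vector of an edge set, in `ℝ^{Sym2 V}`. -/
noncomputable def charVec (M : Set (Sym2 V)) : Sym2 V → ℝ :=
  fun e => by classical exact if e ∈ M then 1 else 0

/-- The characteristic vectors of multicuts of `G'` lifted from `G`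
(the vertex set of the lifted multicut polytope `Ξ_{GG'}`). -/
def liftedVectors (G G' : SimpleGraph V) : Set (Sym2 V → ℝ) :=
  {x | ∃ M : Set (Sym2 V), IsLiftedMulticut G G' M ∧ x = charVec M}

/-- The characteristic vectors of multicuts of `G'`. -/
def multicutVectors (G' : SimpleGraph V) : Set (Sym2 V → ℝ) :=
  {x | ∃ M : Set (Sym2 V), IsMulticut G' M ∧ x = charVec M}

/-- The inequality `ineq`, with associated equality `eqn`, defines a facet of the
lifted multicut polytope `Ξ_{GG'}` (which has dimension `|E'|`): it is valid, and
the face it induces has dimension `|E'| - 1`. -/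
def DefinesFacet (G G' : SimpleGraph V) (ineq eqn : (Sym2 V → ℝ) → Prop) : Prop :=
  (∀ x ∈ liftedVectors G G', ineq x) ∧
  Module.finrank ℝ (vectorSpan ℝ {x ∈ liftedVectors G G' | eqn x}) = G'.edgeSet.ncard - 1

/-- Facet-defining for the multicut polytope `Ξ_{G'}`. -/
def DefinesFacetMC (G' : SimpleGraph V) (ineq eqn : (Sym2 V → ℝ) → Prop) : Prop :=
  (∀ x ∈ multicutVectors G', ineq x) ∧
  Module.finrank ℝ (vectorSpan ℝ {x ∈ multicutVectors G' | eqn x}) = G'.edgeSet.ncard - 1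

/-- `u` is a `v`-`w`-cut-vertex: it lies on every `vw`-path of `G`. -/
def IsCutVertex (G : SimpleGraph V) (v w u : V) : Prop :=
  ∀ p : G.Walk v w, p.IsPath → u ∈ p.support

/-- `S` is a `u`-`v`-separating node set of `G`. -/
def IsSeparatingSet (G : SimpleGraph V) (u v : V) (S : Set V) : Prop :=
  u ∉ S ∧ v ∉ S ∧ ∀ p : G.Walk u v, p.IsPath → ∃ s ∈ S, s ∈ p.support

/-- The side of the cut `C` containing `v`. -/
def vSide (G : SimpleGraph V) (C : Finset (Sym2 V)) (v : V) : Set V :=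
  {u | (G.deleteEdges ↑C).Reachable v u}

/-- The component of `G` induced by `U` is properly `(vw,C)`-connected. -/
def ProperlyConnected (G : SimpleGraph V) (v w : V) (C : Finset (Sym2 V)) (U : Set V) : Prop :=
  (G.induce U).Connected ∧ v ∈ U ∧ w ∈ U ∧
    ({e | e ∈ C ∧ ∀ u ∈ e, u ∈ U} : Set (Sym2 V)).ncard = 1

/-- The component of `G` induced by `U` is improperly `(vw,C)`-connected. -/
def ImproperlyConnected (G : SimpleGraph V) (v w : V) (C : Finset (Sym2 V)) (U : Set V) : Prop :=
  (G.induce U).Connected ∧ (U ⊆ vSide G C v ∨ U ⊆ vSide G C w)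

/-- `(vw,C)`-connected: properly or improperly so. -/
def VWCConnected (G : SimpleGraph V) (v w : V) (C : Finset (Sym2 V)) (U : Set V) : Prop :=
  ProperlyConnected G v w C U ∨ ImproperlyConnected G v w C U

/-- The vertex set of the maximal component of `H` containing `u`. -/
def compSupp (H : SimpleGraph V) (u : V) : Set V := {u' | H.Reachable u u'}

end Defs

section Aux

variable [Fintype V] [DecidableEq V]

lemma charVec_of_mem {M : Set (Sym2 V)} {e : Sym2 V} (h : e ∈ M) : charVec M e = 1 := by
  unfold charVec; exact if_pos h

lemma charVec_of_not_mem {M : Set (Sym2 V)} {e : Sym2 V} (h : e ∉ M) : charVec M e = 0 := by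
  unfold charVec; exact if_neg h

/-- Core combinatorial contradiction. -/
lemma key_contra (G G' : SimpleGraph V) (hG : G.Connected) (hle : G ≤ G')
    (v w : V) (hf : s(v, w) ∈ G'.edgeSet \ G.edgeSet)
    (C : Finset (Sym2 V)) (hC : IsCut G v w C)
    (e : Sym2 V) (he : e ∈ C)
    (hno : ∀ U : Set V, VWCConnected G v w C U → ¬ ∀ u ∈ e, u ∈ U)
    (M : Set (Sym2 V)) (hM : IsLiftedMulticut G G' M)
    (hvw : s(v, w) ∉ M) (hoth : ∀ e' ∈ C, e' ≠ e → e' ∈ M) (heM : e ∉ M) : False := by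
  obtain ⟨P, ⟨hdisj, hcov, hconn⟩, rfl⟩ := hM
  have hnstr : ¬ Straddles P s(v, w) := fun hs => hvw ⟨hf.1, hs⟩
  rw [Straddles] at hnstr
  push_neg at hnstr
  obtain ⟨U, hU, hUall⟩ := hnstr
  have hv : v ∈ U := hUall v (by simp)
  have hw : w ∈ U := hUall w (by simp)
  obtain ⟨p0⟩ := (hconn U hU).preconnected ⟨v, hv⟩ ⟨w, hw⟩
  let p : G.Walk v w := p0.map (SimpleGraph.Embedding.induce U).toHom
  have hsupp : ∀ u ∈ p.support, u ∈ U := by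
    intro u hu
    rw [show p.support = p0.support.map (SimpleGraph.Embedding.induce U).toHom from
      SimpleGraph.Walk.support_map _ _] at hu
    obtain ⟨a, _, rfl⟩ := List.mem_map.mp hu
    exact a.2
  have hcross : ∃ c0 ∈ p.edges, c0 ∈ C := by
    by_contra h
    push_neg at h
    refine hC.2.1 ⟨p.transfer (G.deleteEdges ↑C) ?_⟩
    intro e' he'
    rw [SimpleGraph.edgeSet_deleteEdges]
    exact ⟨p.edges_subset_edgeSet he', h e' he'⟩
  obtain ⟨c0, hc0p, hc0C⟩ := hcross
  have hc0U : ∀ u ∈ c0, u ∈ U := by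
    induction c0 with
    | h a b =>
      intro u hu
      rcases Sym2.mem_iff.mp hu with rfl | rfl
      · exact hsupp _ (p.fst_mem_support_of_mem_edges hc0p)
      · exact hsupp _ (p.snd_mem_support_of_mem_edges hc0p)
  have hc0M : c0 ∉ cutEdges G' P := fun hmem => hmem.2 U hU hc0U
  have hc0e : c0 = e := by
    by_contra hne
    exact hc0M (hoth c0 hc0C hne)
  have hprop : ProperlyConnected G v w C U := by
    refine ⟨hconn U hU, hv, hw, ?_⟩
    have hset : {e' | e' ∈ C ∧ ∀ u ∈ e', u ∈ U} = {e} := by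
      ext e'
      constructor
      · rintro ⟨h1, h2⟩
        by_contra hne
        exact (hoth e' h1 hne).2 U hU h2
      · rintro rfl
        exact ⟨he, hc0e ▸ hc0U⟩
    rw [hset, Set.ncard_singleton]
  exact hno U (Or.inl hprop) (hc0e ▸ hc0U)

end Aux
/-- If some `e ∈ C` lies in no `(vw,C)`-connected component of
`G`, then every lifted multicut vector satisfying the cut equality has `x_e = 1`;
consequently the corresponding face of `Ξ_{GG'}` has dimension at most `|E'| - 2`
and is not a facet. -/
theorem cut_face_not_facet [Fintype V] [DecidableEq V]
    (G G' : SimpleGraph V) (hG : G.Connected) (hle : G ≤ G')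
    (v w : V) (hf : s(v, w) ∈ G'.edgeSet \ G.edgeSet)
    (C : Finset (Sym2 V)) (hC : IsCut G v w C)
    (e : Sym2 V) (he : e ∈ C)
    (hno : ∀ U : Set V, VWCConnected G v w C U → ¬ ∀ u ∈ e, u ∈ U) :
    (∀ x : Sym2 V → ℕ, (∀ e', x e' = 0 ∨ x e' = 1) → (∀ e' ∉ G'.edgeSet, x e' = 0) →
      IsLiftedMulticut G G' {e' | x e' = 1} →
      1 - x s(v, w) = ∑ e' ∈ C, (1 - x e') → x e = 1) ∧
    Module.finrank ℝ (vectorSpan ℝ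
        {x ∈ liftedVectors G G' | 1 - x s(v, w) = ∑ e' ∈ C, (1 - x e')}) ≤
      G'.edgeSet.ncard - 2 ∧
    ¬ DefinesFacet G G' (fun x => 1 - x s(v, w) ≤ ∑ e' ∈ C, (1 - x e'))
        (fun x => 1 - x s(v, w) = ∑ e' ∈ C, (1 - x e')) := by
  classical
  have hvwE' : s(v, w) ∈ G'.edgeSet := hf.1
  have hvwE : s(v, w) ∉ G.edgeSet := hf.2
  have heE : e ∈ G.edgeSet := hC.1 he
  have heE' : e ∈ G'.edgeSet := (SimpleGraph.edgeSet_subset_edgeSet.mpr hle) heE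
  have hene : e ≠ s(v, w) := fun h => hvwE (h ▸ heE)
  -- Part 1 : the natural-number statement
  have part1 : ∀ x : Sym2 V → ℕ, (∀ e', x e' = 0 ∨ x e' = 1) → (∀ e' ∉ G'.edgeSet, x e' = 0) →
      IsLiftedMulticut G G' {e' | x e' = 1} →
      1 - x s(v, w) = ∑ e' ∈ C, (1 - x e') → x e = 1 := by
    intro x h01 _ hM heq
    rcases h01 e with hxe | hxe
    swap
    · exact hxe
    exfalso
    have hterm : 1 - x e = 1 := by rw [hxe]
    have hs : ∑ e' ∈ C, (1 - x e') = (1 - x e) + ∑ e' ∈ C.erase e, (1 - x e') :=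
      (Finset.add_sum_erase C _ he).symm
    have hge1 : 1 ≤ ∑ e' ∈ C, (1 - x e') := by omega
    have hxvw : x s(v, w) = 0 := by
      rcases h01 s(v, w) with h | h
      · exact h
      · exfalso; rw [h] at heq; omega
    have hrest : ∑ e' ∈ C.erase e, (1 - x e') = 0 := by
      rw [hxvw] at heq; omega
    have hoth : ∀ e' ∈ C, e' ≠ e → e' ∈ {e'' | x e'' = 1} := by
      intro e' he' hne
      have h0 : 1 - x e' = 0 :=
        Finset.sum_eq_zero_iff.mp hrest e' (Finset.mem_erase.mpr ⟨hne, he'⟩)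
      rcases h01 e' with h | h
      · omega
      · exact h
    exact key_contra G G' hG hle v w hf C hC e he hno _ hM
      (by simp [hxvw]) hoth (by simp [hxe])
  -- Real version : any point of the face has `x e = 1`.
  set S : Set (Sym2 V → ℝ) :=
    {x ∈ liftedVectors G G' | 1 - x s(v, w) = ∑ e' ∈ C, (1 - x e')} with hS
  have hface : ∀ x ∈ S, x e = 1 ∧ x s(v, w) - ∑ e' ∈ C, x e' = 1 - C.card ∧
      ∀ e' ∉ G'.edgeSet, x e' = 0 := by
    rintro x ⟨⟨M, hM, rfl⟩, heq⟩
    have hMsub : M ⊆ G'.edgeSet := by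
      obtain ⟨P, _, rfl⟩ := hM
      exact fun e' he' => he'.1
    have hsupp : ∀ e' ∉ G'.edgeSet, charVec M e' = 0 := fun e' he' =>
      charVec_of_not_mem (fun hmem => he' (hMsub hmem))
    have hxe : charVec M e = 1 := by
      by_contra hxe
      have heM : e ∉ M := fun h => hxe (charVec_of_mem h)
      have hterm : (1 : ℝ) - charVec M e = 1 := by rw [charVec_of_not_mem heM]; ring
      have hnonneg : ∀ e' ∈ C, (0 : ℝ) ≤ 1 - charVec M e' := by
        intro e' _
        by_cases h : e' ∈ M
        · rw [charVec_of_mem h]; norm_num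
        · rw [charVec_of_not_mem h]; norm_num
      have hge1 : (1 : ℝ) ≤ ∑ e' ∈ C, (1 - charVec M e') := by
        calc (1 : ℝ) = 1 - charVec M e := hterm.symm
        _ ≤ _ := Finset.single_le_sum hnonneg he
      have hvw0 : charVec M s(v, w) = 0 := by
        by_cases h : s(v, w) ∈ M
        · exfalso; rw [charVec_of_mem h] at heq; rw [← heq] at hge1; norm_num at hge1
        · exact charVec_of_not_mem h
      have hvwM : s(v, w) ∉ M := fun h => by
        rw [charVec_of_mem h] at hvw0; norm_num at hvw0
      have hsum1 : ∑ e' ∈ C, ((1 : ℝ) - charVec M e') = 1 := by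
        rw [← heq, hvw0]; ring
      have hrest : ∑ e' ∈ C.erase e, ((1 : ℝ) - charVec M e') = 0 := by
        have := (Finset.add_sum_erase C (fun e' => (1 : ℝ) - charVec M e') he).symm
        rw [hsum1, hterm] at this
        linarith
      have hoth : ∀ e' ∈ C, e' ≠ e → e' ∈ M := by
        intro e' he' hne
        have h0 : (1 : ℝ) - charVec M e' = 0 :=
          (Finset.sum_eq_zero_iff_of_nonneg
            (fun e'' he'' => hnonneg e'' (Finset.mem_of_mem_erase he''))).mp hrest e'
            (Finset.mem_erase.mpr ⟨hne, he'⟩)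
        by_contra h
        rw [charVec_of_not_mem h] at h0
        norm_num at h0
      exact key_contra G G' hG hle v w hf C hC e he hno M hM hvwM hoth heM
    refine ⟨hxe, ?_, hsupp⟩
    have := heq
    rw [Finset.sum_sub_distrib, Finset.sum_const, nsmul_eq_mul, mul_one] at this
    linarith
  -- The linear constraints subspace
  let f1 : (Sym2 V → ℝ) →ₗ[ℝ] ℝ := LinearMap.proj e
  let f2 : (Sym2 V → ℝ) →ₗ[ℝ] ℝ :=
    LinearMap.proj (R := ℝ) (φ := fun _ : Sym2 V => ℝ) s(v, w) -
      ∑ e' ∈ C, LinearMap.proj (R := ℝ) (φ := fun _ : Sym2 V => ℝ) e'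
  let K : Submodule ℝ (Sym2 V → ℝ) :=
    ⨅ (e' : Sym2 V) (_ : e' ∉ G'.edgeSet), LinearMap.ker (LinearMap.proj (R := ℝ)
      (φ := fun _ : Sym2 V => ℝ) e')
  let W : Submodule ℝ (Sym2 V → ℝ) := LinearMap.ker f1 ⊓ LinearMap.ker f2 ⊓ K
  have hf2 : ∀ y : Sym2 V → ℝ, f2 y = y s(v, w) - ∑ e' ∈ C, y e' := by
    intro y
    simp [f2, LinearMap.sub_apply, LinearMap.sum_apply, LinearMap.proj_apply]
  have hWmem : ∀ y : Sym2 V → ℝ, (y e = 0 ∧ (y s(v, w) - ∑ e' ∈ C, y e' = 0) ∧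
      ∀ e' ∉ G'.edgeSet, y e' = 0) → y ∈ W := by
    rintro y ⟨h1, h2, h3⟩
    refine Submodule.mem_inf.mpr ⟨Submodule.mem_inf.mpr ⟨?_, ?_⟩, ?_⟩
    · simpa [f1, LinearMap.mem_ker, LinearMap.proj_apply] using h1
    · rw [LinearMap.mem_ker, hf2]; exact h2
    · simp only [K, Submodule.mem_iInf, LinearMap.mem_ker, LinearMap.proj_apply]
      exact h3
  have hspan : vectorSpan ℝ S ≤ W := by
    rw [vectorSpan_def, Submodule.span_le]
    rintro y ⟨x1, hx1, x2, hx2, rfl⟩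
    simp only [vsub_eq_sub]
    obtain ⟨h1e, h1f, h1s⟩ := hface x1 hx1
    obtain ⟨h2e, h2f, h2s⟩ := hface x2 hx2
    refine hWmem _ ⟨?_, ?_, ?_⟩
    · simp [h1e, h2e]
    · have hsub : (x1 - x2) s(v, w) - ∑ e' ∈ C, (x1 - x2) e' =
          (x1 s(v, w) - ∑ e' ∈ C, x1 e') - (x2 s(v, w) - ∑ e' ∈ C, x2 e') := by
        simp only [Pi.sub_apply, Finset.sum_sub_distrib]
        ring
      rw [hsub, h1f, h2f]
      ring
    · intro e' he'
      simp [h1s e' he', h2s e' he']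
  -- Bound the dimension of `W`
  let T : Finset (Sym2 V) := G'.edgeSet.toFinset \ {e, s(v, w)}
  have hpair : ({e, s(v, w)} : Finset (Sym2 V)) ⊆ G'.edgeSet.toFinset := by
    intro a ha
    rcases Finset.mem_insert.mp ha with rfl | ha
    · simpa using heE'
    · rw [Finset.mem_singleton] at ha; subst ha; simpa using hvwE'
  have hTcard : T.card = G'.edgeSet.ncard - 2 := by
    rw [Finset.card_sdiff_of_subset hpair, Set.ncard_eq_toFinset_card']
    congr 1
    rw [Finset.card_insert_of_notMem (by simpa using hene), Finset.card_singleton]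
  let ψ : W →ₗ[ℝ] (↥T → ℝ) :=
    (LinearMap.funLeft ℝ ℝ (fun t : ↥T => (t : Sym2 V))).comp W.subtype
  have hψinj : Function.Injective ψ := by
    rw [← LinearMap.ker_eq_bot, Submodule.eq_bot_iff]
    rintro ⟨y, hy⟩ hker
    obtain ⟨hy12, hy3⟩ := Submodule.mem_inf.mp hy
    obtain ⟨hy1, hy2⟩ := Submodule.mem_inf.mp hy12
    have hT0 : ∀ e' ∈ T, y e' = 0 := by
      intro e' he'
      have := congrFun hker ⟨e', he'⟩
      simpa [ψ, LinearMap.funLeft] using this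
    have hy1' : y e = 0 := by simpa [f1, LinearMap.proj_apply] using hy1
    have hout : ∀ e' ∉ G'.edgeSet, y e' = 0 := by
      intro e' he'
      simp only [K, Submodule.mem_iInf, LinearMap.mem_ker, LinearMap.proj_apply] at hy3
      exact hy3 e' he'
    have hCzero : ∀ e' ∈ C, y e' = 0 := by
      intro e' he'
      by_cases h : e' = e
      · rw [h]; exact hy1'
      · refine hT0 e' ?_
        have he'E : e' ∈ G.edgeSet := hC.1 he'
        have : e' ≠ s(v, w) := fun hh => hvwE (hh ▸ he'E)
        simp only [T, Finset.mem_sdiff, Set.mem_toFinset, Finset.mem_insert,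
          Finset.mem_singleton]
        exact ⟨(SimpleGraph.edgeSet_subset_edgeSet.mpr hle) he'E, by tauto⟩
    have hyvw : y s(v, w) = 0 := by
      rw [LinearMap.mem_ker, hf2] at hy2
      rw [Finset.sum_eq_zero hCzero] at hy2
      linarith
    have : y = 0 := by
      funext e'
      by_cases h1 : e' ∈ G'.edgeSet
      · by_cases h2 : e' = e
        · rw [h2]; exact hy1'
        · by_cases h3 : e' = s(v, w)
          · rw [h3]; exact hyvw
          · exact hT0 e' (by simp only [T, Finset.mem_sdiff, Set.mem_toFinset,
              Finset.mem_insert, Finset.mem_singleton]; tauto)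
      · exact hout e' h1
    exact Subtype.ext this
  have hdimW : Module.finrank ℝ W ≤ G'.edgeSet.ncard - 2 := by
    have := LinearMap.finrank_le_finrank_of_injective hψinj
    rwa [Module.finrank_fintype_fun_eq_card, Fintype.card_coe, hTcard] at this
  have part2 : Module.finrank ℝ (vectorSpan ℝ S) ≤ G'.edgeSet.ncard - 2 :=
    le_trans (Submodule.finrank_mono hspan) hdimW
  refine ⟨part1, part2, ?_⟩
  rintro ⟨-, hrk⟩
  have hcard2 : 2 ≤ G'.edgeSet.ncard := by
    rw [Set.ncard_eq_toFinset_card']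
    calc 2 = ({e, s(v, w)} : Finset (Sym2 V)).card := by
          rw [Finset.card_insert_of_notMem (by simpa using hene), Finset.card_singleton]
    _ ≤ _ := Finset.card_le_card hpair
  have hrk' : Module.finrank ℝ (vectorSpan ℝ S) = G'.edgeSet.ncard - 1 := by
    convert hrk using 3
  rw [hrk'] at part2
  have h2 : G'.edgeSet.ncard - 1 ≤ G'.edgeSet.ncard - 2 := part2
  clear * - hcard2 h2
  omega
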